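/- arXiv:2409.05761 — 3 statements merged into one kernel-verified Lean document; each statement's English description precedes it below -/
import Mathlib

section
/- (Rankin's trick) For all real x ≥ 1, y ≥ 2, and every σ > 0, the number Ψ(x,y) of y-smooth integers n ≤ x satisfies Ψ(x,y) ≤ x^σ · ∏_{p ≤ y} (1 - p^{-σ})^{-1}. -/
open Finset Classical
set_option maxHeartbeats 400000

/-- Rankin's trick: for all real `x ≥ 1`, `y ≥ 2` and every `σ > 0`, the number `Ψ(x,y)` of
`y`-smooth integers `n ≤ x` satisfies `Ψ(x,y) ≤ x^σ · ∏_{p ≤ y} (1 - p^{-σ})⁻¹`. -/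
theorem rankin_trick (x y σ : ℝ) (hx : 1 ≤ x) (hy : 2 ≤ y) (hσ : 0 < σ) :
    (((Finset.Icc 1 ⌊x⌋₊).filter
        (fun n => ∀ p : ℕ, p.Prime → p ∣ n → (p : ℝ) ≤ y)).card : ℝ) ≤
      x ^ σ * ∏ p ∈ (Finset.Iic ⌊y⌋₊).filter Nat.Prime, (1 - (p : ℝ) ^ (-σ))⁻¹ := by
  set N : ℕ := ⌊y⌋₊ + 1 with hN
  set S : Finset ℕ := (Finset.Icc 1 ⌊x⌋₊).filter
      (fun n => ∀ p : ℕ, p.Prime → p ∣ n → (p : ℝ) ≤ y) with hS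
  have hx0 : (0 : ℝ) ≤ x := by linarith
  -- the completely multiplicative function n ↦ n^{-σ}
  let f : ℕ →* ℝ :=
    { toFun := fun n => (n : ℝ) ^ (-σ)
      map_one' := by simp
      map_mul' := fun m n => by
        push_cast
        rw [Real.mul_rpow (by positivity) (by positivity)] }
  have hf : ∀ {p : ℕ}, p.Prime → ‖f p‖ < 1 := by
    intro p hp
    have h1 : (1 : ℝ) < (p : ℝ) := by exact_mod_cast hp.one_lt
    have hlt : (p : ℝ) ^ (-σ) < 1 := by
      rw [Real.rpow_neg (by positivity), inv_lt_one_iff₀]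
      right
      exact (Real.one_lt_rpow_iff_of_pos (by positivity)).mpr (Or.inl ⟨h1, hσ⟩)
    have hpos : (0 : ℝ) < (p : ℝ) ^ (-σ) := Real.rpow_pos_of_pos (by positivity) _
    simpa [f, Real.norm_eq_abs, abs_of_pos hpos] using hlt
  obtain ⟨hsummable, hhassum⟩ :=
    EulerProduct.summable_and_hasSum_smoothNumbers_prod_primesBelow_geometric (f := f) hf N
  -- S maps into smooth numbers
  have hmem : ∀ n ∈ S, n ∈ Nat.smoothNumbers N := by
    intro n hn
    rw [hS, Finset.mem_filter, Finset.mem_Icc] at hn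
    obtain ⟨⟨h1, h2⟩, h3⟩ := hn
    rw [Nat.mem_smoothNumbers]
    refine ⟨by omega, fun p hp => ?_⟩
    have hpp : p.Prime := Nat.prime_of_mem_primeFactorsList hp
    have hpd : p ∣ n := Nat.dvd_of_mem_primeFactorsList hp
    have hple : p ≤ ⌊y⌋₊ := Nat.le_floor (h3 p hpp hpd)
    omega
  -- basic facts about n ∈ S
  have hn1 : ∀ n ∈ S, 1 ≤ n := fun n hn =>
    (Finset.mem_Icc.mp (Finset.mem_filter.mp hn).1).1
  have hnx : ∀ n ∈ S, (n : ℝ) ≤ x := fun n hn =>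
    le_trans (by exact_mod_cast (Finset.mem_Icc.mp (Finset.mem_filter.mp hn).1).2)
      (Nat.floor_le hx0)
  -- Step 1 : card ≤ ∑ (x/n)^σ
  have step1 : (S.card : ℝ) ≤ ∑ n ∈ S, (x / n) ^ σ := by
    have : (S.card : ℝ) = ∑ _n ∈ S, (1 : ℝ) := by simp
    rw [this]
    refine Finset.sum_le_sum fun n hn => ?_
    have hn0 : (0 : ℝ) < n := by exact_mod_cast hn1 n hn
    have : (1 : ℝ) ≤ x / n := (one_le_div hn0).mpr (hnx n hn)
    exact Real.one_le_rpow this hσ.le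
  -- Step 2 : rewrite the sum
  have step2 : ∑ n ∈ S, (x / n) ^ σ = x ^ σ * ∑ n ∈ S, (n : ℝ) ^ (-σ) := by
    rw [Finset.mul_sum]
    refine Finset.sum_congr rfl fun n hn => ?_
    have hn0 : (0 : ℝ) < n := by exact_mod_cast hn1 n hn
    rw [Real.div_rpow hx0 hn0.le, Real.rpow_neg hn0.le, div_eq_mul_inv]
  -- Step 3 : ∑ n ∈ S, n^{-σ} ≤ ∏ p ∈ N.primesBelow, (1 - p^{-σ})⁻¹
  have step3 : ∑ n ∈ S, (n : ℝ) ^ (-σ) ≤ ∏ p ∈ N.primesBelow, (1 - (p : ℝ) ^ (-σ))⁻¹ := by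
    have hsum' : Summable (fun m : Nat.smoothNumbers N => f m) := hsummable.of_norm
    let T : Finset (Nat.smoothNumbers N) :=
      S.attach.map ⟨fun n => ⟨n.1, hmem n.1 n.2⟩, fun a b h => Subtype.ext (by
        simpa using congrArg Subtype.val h)⟩
    have hTsum : ∑ m ∈ T, f m = ∑ n ∈ S, (n : ℝ) ^ (-σ) := by
      rw [Finset.sum_map]
      exact Finset.sum_attach S _
    calc ∑ n ∈ S, (n : ℝ) ^ (-σ) = ∑ m ∈ T, f m := hTsum.symm
      _ ≤ ∑' m : Nat.smoothNumbers N, f m := by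
          refine Summable.sum_le_tsum T (fun m _ => ?_) hsum'
          exact Real.rpow_nonneg (Nat.cast_nonneg _) _
      _ = ∏ p ∈ N.primesBelow, (1 - (p : ℝ) ^ (-σ))⁻¹ := hhassum.tsum_eq
  -- identify the index sets of the products
  have hsets : (Finset.Iic ⌊y⌋₊).filter Nat.Prime = N.primesBelow := by
    ext p
    simp [Nat.mem_primesBelow, Nat.lt_succ_iff, hN]
  calc (S.card : ℝ) ≤ ∑ n ∈ S, (x / n) ^ σ := step1
    _ = x ^ σ * ∑ n ∈ S, (n : ℝ) ^ (-σ) := step2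
    _ ≤ x ^ σ * ∏ p ∈ N.primesBelow, (1 - (p : ℝ) ^ (-σ))⁻¹ := by
        refine mul_le_mul_of_nonneg_left step3 (by positivity)
    _ = x ^ σ * ∏ p ∈ (Finset.Iic ⌊y⌋₊).filter Nat.Prime, (1 - (p : ℝ) ^ (-σ))⁻¹ := by
        rw [hsets]
end

section
/- For y ≥ 2 and x ≥ y, one has ∑ 1/(p_1 ⋯ p_{k-1} m) ≤ C_{δ'} log x, where the sum ranges over all k ≥ 1, distinct primes p_1, …, p_{k-1} > y, and positive integers m with p_1⋯p_{k-1} m ≤ x/y, provided y ≥ x^{δ'} for some fixed δ' > 0; here C_{δ'} depends only on δ'. -/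
open Finset

/-- If `y ≥ x^{δ'}`, `2 ≤ y ≤ x`, then the sum of `1/(p₁⋯p_{k-1} m)` over all sets of
distinct primes `p_i > y` and positive integers `m` with `p₁⋯p_{k-1} m ≤ x/y` is at most
`C_{δ'} log x`, where `C_{δ'}` depends only on `δ'`. -/
theorem harmonic_sum_over_factorizations (δ' : ℝ) (hδ' : 0 < δ') :
    ∃ C : ℝ, 0 < C ∧ ∀ (x y : ℝ), 2 ≤ y → y ≤ x → x ^ δ' ≤ y →
      (∑ q ∈ ((((Finset.range (⌊x⌋₊ + 1)).filter Nat.Prime).filter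
            (fun p => ⌊y⌋₊ < p)).powerset ×ˢ Finset.Icc 1 ⌊x / y⌋₊).filter
          (fun q => (((∏ p ∈ q.1, p) * q.2 : ℕ) : ℝ) ≤ x / y),
        (1 : ℝ) / (((∏ p ∈ q.1, p) * q.2 : ℕ) : ℝ)) ≤ C * Real.log x := by
  classical
  set K : ℕ := ⌈1/δ'⌉₊ with hK
  refine ⟨2^K * (1/Real.log 2 + 1), by positivity, ?_⟩
  intro x y hy hyx hxy
  have hx2 : (2:ℝ) ≤ x := le_trans hy hyx
  have hx1 : (1:ℝ) < x := by linarith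
  have hy0 : (0:ℝ) < y := by linarith
  have hxy1 : (1:ℝ) ≤ x / y := (one_le_div hy0).mpr hyx
  set N := ⌊x / y⌋₊ with hN
  set P := (((Finset.range (⌊x⌋₊ + 1)).filter Nat.Prime).filter (fun p => ⌊y⌋₊ < p)) with hP
  set s := ((P.powerset ×ˢ Finset.Icc 1 N).filter
      (fun q => (((∏ p ∈ q.1, p) * q.2 : ℕ) : ℝ) ≤ x / y)) with hs
  have hmaps : ∀ q ∈ s, (∏ p ∈ q.1, p) * q.2 ∈ Finset.Icc 1 N := by
    intro q hq
    simp only [hs, Finset.mem_filter, Finset.mem_product, Finset.mem_powerset,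
      Finset.mem_Icc] at hq
    obtain ⟨⟨hq1, hq2⟩, hq3⟩ := hq
    have hpos : 0 < (∏ p ∈ q.1, p) * q.2 := by
      apply Nat.mul_pos _ hq2.1
      exact Finset.prod_pos fun p hp => by
        have := Finset.mem_filter.mp (Finset.mem_filter.mp (hq1 hp)).1
        exact this.2.pos
    refine Finset.mem_Icc.mpr ⟨hpos, Nat.le_floor ?_⟩
    exact hq3
  rw [← Finset.sum_fiberwise_of_maps_to hmaps]
  -- bound each fiber
  have hfiber : ∀ r ∈ Finset.Icc 1 N,
      (∑ q ∈ s.filter (fun q => (∏ p ∈ q.1, p) * q.2 = r),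
        (1 : ℝ) / (((∏ p ∈ q.1, p) * q.2 : ℕ) : ℝ)) ≤ (2^K : ℝ) * (1 / (r:ℝ)) := by
    intro r hr
    have hr1 : 1 ≤ r := (Finset.mem_Icc.mp hr).1
    have hrN : r ≤ N := (Finset.mem_Icc.mp hr).2
    have hsum : (∑ q ∈ s.filter (fun q => (∏ p ∈ q.1, p) * q.2 = r),
        (1 : ℝ) / (((∏ p ∈ q.1, p) * q.2 : ℕ) : ℝ))
        = (s.filter (fun q => (∏ p ∈ q.1, p) * q.2 = r)).card * (1 / (r:ℝ)) := by
      rw [Finset.sum_congr rfl (fun q hq => by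
        rw [(Finset.mem_filter.mp hq).2]), Finset.sum_const, nsmul_eq_mul]
    rw [hsum]
    refine mul_le_mul_of_nonneg_right ?_ (by positivity)
    -- card bound
    set Pr := r.primeFactors.filter (fun p => ⌊y⌋₊ < p) with hPr
    have hcard : (s.filter (fun q => (∏ p ∈ q.1, p) * q.2 = r)).card ≤ 2 ^ Pr.card := by
      rw [← Finset.card_powerset Pr]
      apply Finset.card_le_card_of_injOn (fun q => q.1)
      · intro q hq
        simp only [Finset.mem_coe, Finset.mem_filter, hs, Finset.mem_product, Finset.mem_powerset] at hq ⊢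
        obtain ⟨⟨⟨hq1, hq2⟩, hq3⟩, hq4⟩ := hq
        intro p hp
        have hpP := hq1 hp
        have hpmem := Finset.mem_filter.mp hpP
        have hpprime : p.Prime := (Finset.mem_filter.mp hpmem.1).2
        refine Finset.mem_filter.mpr ⟨Nat.mem_primeFactors.mpr ⟨hpprime, ?_, ?_⟩, hpmem.2⟩
        · calc p ∣ ∏ p ∈ q.1, p := Finset.dvd_prod_of_mem _ hp
            _ ∣ r := hq4 ▸ Dvd.intro q.2 rfl
        · omega
      · intro q hq q' hq' hqq'
        simp only [Finset.coe_filter, Set.mem_setOf_eq] at hq hq'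
        have hqq1 : q.1 = q'.1 := hqq'
        have h1 : (∏ p ∈ q.1, p) * q.2 = (∏ p ∈ q'.1, p) * q'.2 := by rw [hq.2, hq'.2]
        rw [hqq1] at h1
        have hpos : 0 < ∏ p ∈ q'.1, p := by
          have hq1 := (Finset.mem_product.mp (Finset.mem_filter.mp hq'.1).1).1
          exact Finset.prod_pos fun p hp => by
            have := Finset.mem_filter.mp (Finset.mem_filter.mp
              ((Finset.mem_powerset.mp hq1) hp)).1
            exact this.2.pos
        exact Prod.ext hqq1 (Nat.eq_of_mul_eq_mul_left hpos h1)
    refine (Nat.cast_le.mpr hcard).trans ?_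
    push_cast
    apply pow_le_pow_right₀ one_le_two
    -- Pr.card ≤ K
    have hdvd : (∏ p ∈ Pr, p) ∣ r := Finset.prod_primes_dvd r
      (fun p hp => (Nat.prime_of_mem_primeFactors (Finset.mem_filter.mp hp).1).prime)
      (fun p hp => Nat.dvd_of_mem_primeFactors (Finset.mem_filter.mp hp).1)
    have hprodle : (∏ p ∈ Pr, p) ≤ r := Nat.le_of_dvd hr1 hdvd
    have hylt : ∀ p ∈ Pr, y < (p:ℝ) := by
      intro p hp
      have := (Finset.mem_filter.mp hp).2
      have h2 : y < (⌊y⌋₊ : ℝ) + 1 := Nat.lt_floor_add_one y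
      have : (⌊y⌋₊:ℝ) + 1 ≤ (p:ℝ) := by exact_mod_cast this
      linarith
    have hyt : y ^ Pr.card ≤ (r:ℝ) := by
      calc y ^ Pr.card = ∏ _p ∈ Pr, y := by rw [Finset.prod_const]
        _ ≤ ∏ p ∈ Pr, (p:ℝ) := Finset.prod_le_prod (fun _ _ => le_of_lt hy0)
            (fun p hp => (hylt p hp).le)
        _ = ((∏ p ∈ Pr, p : ℕ) : ℝ) := by push_cast; rfl
        _ ≤ (r:ℝ) := Nat.cast_le.mpr hprodle
    have hrx : (r:ℝ) ≤ x := by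
      calc (r:ℝ) ≤ (N:ℝ) := Nat.cast_le.mpr hrN
        _ ≤ x / y := Nat.floor_le (by linarith)
        _ ≤ x := by
            rw [div_le_iff₀ hy0]
            nlinarith
    have hxt : x ^ (δ' * Pr.card) ≤ x ^ (1:ℝ) := by
      rw [Real.rpow_one, Real.rpow_mul (by linarith), Real.rpow_natCast]
      calc (x ^ δ') ^ Pr.card ≤ y ^ Pr.card := by
            apply pow_le_pow_left₀ (Real.rpow_nonneg (by linarith) _) hxy
        _ ≤ (r:ℝ) := hyt
        _ ≤ x := hrx
    have ht : δ' * Pr.card ≤ 1 := (Real.rpow_le_rpow_left_iff hx1).mp hxt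
    have : (Pr.card : ℝ) ≤ 1 / δ' := by
      rw [le_div_iff₀ hδ']
      linarith [mul_comm δ' (Pr.card:ℝ)]
    calc Pr.card ≤ ⌈(1/δ' : ℝ)⌉₊ := by
          exact_mod_cast this.trans (Nat.le_ceil _)
      _ = K := rfl
  calc (∑ r ∈ Finset.Icc 1 N, ∑ q ∈ s.filter (fun q => (∏ p ∈ q.1, p) * q.2 = r),
        (1 : ℝ) / (((∏ p ∈ q.1, p) * q.2 : ℕ) : ℝ))
      ≤ ∑ r ∈ Finset.Icc 1 N, (2^K : ℝ) * (1 / (r:ℝ)) := Finset.sum_le_sum hfiber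
    _ = (2^K : ℝ) * ∑ r ∈ Finset.Icc 1 N, (1 / (r:ℝ)) := by rw [Finset.mul_sum]
    _ ≤ (2^K : ℝ) * (1 + Real.log (x/y)) := by
        gcongr
        have := harmonic_floor_le_one_add_log (x/y) hxy1
        calc (∑ r ∈ Finset.Icc 1 N, (1 / (r:ℝ)))
            = ((harmonic N : ℚ) : ℝ) := by
              rw [harmonic_eq_sum_Icc]
              push_cast
              simp [one_div]
          _ ≤ 1 + Real.log (x/y) := this
    _ ≤ (2^K : ℝ) * (1 + Real.log x) := by
        gcongr
        rw [div_le_iff₀ hy0]; nlinarith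
    _ ≤ 2^K * (1/Real.log 2 + 1) * Real.log x := by
        have hl2 : 0 < Real.log 2 := Real.log_pos one_lt_two
        have hlx : Real.log 2 ≤ Real.log x := Real.log_le_log two_pos hx2
        have h1 : (1:ℝ) ≤ (1/Real.log 2) * Real.log x := by
          rw [one_div, inv_mul_eq_div, le_div_iff₀ hl2]; linarith
        have hK0 : (0:ℝ) ≤ 2^K := by positivity
        nlinarith [Real.log_nonneg hx1.le]
end

section
/- Let x, h be reals with 2 ≤ h ≤ x, and let s ∈ ℂ with Re(s) ≤ 10 and s ≠ 0. Then ((x+h)^s − x^s)/s = x^s (h/x + O(|s−1| h²/x²)), where the implied constant is absolute. Moreover |((x+h)^s − x^s)/s| ≤ C |x^s| h/x for an absolute constant C. -/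
open Complex

lemma rpow_aux {x u t : ℝ} (hx : 0 < x) (hxu : x ≤ u) (hu : u ≤ 2 * x) (ht : t ≤ 9) :
    u ^ t ≤ 512 * x ^ t := by
  rcases le_or_gt t 0 with h0 | h0
  · calc u ^ t ≤ x ^ t := Real.rpow_le_rpow_of_nonpos hx hxu h0
      _ ≤ 512 * x ^ t := le_mul_of_one_le_left (Real.rpow_nonneg hx.le t) (by norm_num)
  · calc u ^ t ≤ (2 * x) ^ t := Real.rpow_le_rpow (hx.le.trans hxu) hu h0.le
      _ = 2 ^ t * x ^ t := Real.mul_rpow (by norm_num) hx.le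
      _ ≤ 512 * x ^ t := by
          have h1 : (2:ℝ) ^ t ≤ 2 ^ (9:ℝ) := Real.rpow_le_rpow_of_exponent_le one_le_two ht
          have h2 : (2:ℝ) ^ (9:ℝ) = 512 := by
            rw [show (9:ℝ) = ((9:ℕ):ℝ) by norm_num, Real.rpow_natCast]; norm_num
          nlinarith [Real.rpow_nonneg hx.le t]

lemma key_int {a b : ℝ} {s : ℂ} (ha : 0 < a) (hab : a ≤ b) (hs : s ≠ 0) :
    (((b:ℝ):ℂ) ^ s - ((a:ℝ):ℂ) ^ s) / s = ∫ u in a..b, ((u:ℝ):ℂ) ^ (s - 1) := by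
  rw [integral_cpow (Or.inr ⟨fun h => hs (by linear_combination h),
    Set.notMem_uIcc_of_lt ha (ha.trans_le hab)⟩)]
  rw [sub_add_cancel]

/-- For `2 ≤ h ≤ x` and `s ∈ ℂ` with `Re(s) ≤ 10`, `s ≠ 0`:
`((x+h)^s − x^s)/s = x^s (h/x + O(|s−1| h²/x²))` and `|((x+h)^s − x^s)/s| ≤ C|x^s| h/x`,
with absolute implied constants. -/
theorem short_interval_taylor :
    ∃ C : ℝ, 0 < C ∧ ∀ (x h : ℝ) (s : ℂ), 2 ≤ h → h ≤ x → s.re ≤ 10 → s ≠ 0 →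
      Norm.norm ((((x + h : ℝ) : ℂ) ^ s - ((x : ℝ) : ℂ) ^ s) / s -
          ((x : ℝ) : ℂ) ^ s * ((h : ℝ) / x)) ≤
        C * Norm.norm (((x : ℝ) : ℂ) ^ s) * Norm.norm (s - 1) * h ^ 2 / x ^ 2 ∧
      Norm.norm ((((x + h : ℝ) : ℂ) ^ s - ((x : ℝ) : ℂ) ^ s) / s) ≤
        C * Norm.norm (((x : ℝ) : ℂ) ^ s) * h / x := by
  refine ⟨512, by norm_num, fun x h s h2 hhx hre hs => ?_⟩
  have hh : 0 < h := by linarith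
  have hx : 0 < x := by linarith
  have hxh : 0 < x + h := by linarith
  have hx0 : ((x:ℝ):ℂ) ≠ 0 := by exact_mod_cast hx.ne'
  have habs : ‖((x:ℝ):ℂ) ^ s‖ = x ^ s.re :=
    Complex.norm_cpow_eq_rpow_re_of_pos hx _
  have hxsub : x ^ (s.re - 1) = x ^ s.re / x := by
    rw [Real.rpow_sub hx, Real.rpow_one]
  -- identity
  have hid : (((x + h : ℝ) : ℂ) ^ s - ((x : ℝ) : ℂ) ^ s) / s
      = ∫ u in x..(x + h), ((u:ℝ):ℂ) ^ (s - 1) := key_int hx (by linarith) hs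
  -- bound on integrand
  have hbd : ∀ u ∈ Set.uIoc x (x + h), ‖((u:ℝ):ℂ) ^ (s - 1)‖ ≤ 512 * x ^ s.re / x := by
    intro u hu
    rw [Set.uIoc_of_le (by linarith : x ≤ x + h)] at hu
    have hu1 : x ≤ u := hu.1.le
    have hu2 : u ≤ 2 * x := by have := hu.2; linarith
    have hupos : 0 < u := hx.trans hu.1
    rw [Complex.norm_cpow_eq_rpow_re_of_pos hupos]
    have : u ^ (s - 1).re ≤ 512 * x ^ (s - 1).re :=
      rpow_aux hx hu1 hu2 (by simp [Complex.sub_re]; linarith)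
    calc u ^ (s - 1).re ≤ 512 * x ^ (s - 1).re := this
      _ = 512 * x ^ s.re / x := by
          simp only [Complex.sub_re, Complex.one_re, hxsub]; ring
  -- second bound
  have hsecond : ‖(((x + h : ℝ) : ℂ) ^ s - ((x : ℝ) : ℂ) ^ s) / s‖ ≤
      512 * ‖((x : ℝ) : ℂ) ^ s‖ * h / x := by
    rw [hid]
    calc ‖∫ u in x..(x + h), ((u:ℝ):ℂ) ^ (s - 1)‖
        ≤ 512 * x ^ s.re / x * |x + h - x| :=
          intervalIntegral.norm_integral_le_of_norm_le_const hbd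
      _ = 512 * ‖((x : ℝ) : ℂ) ^ s‖ * h / x := by
          rw [habs, _root_.abs_of_pos (by linarith : (0:ℝ) < x + h - x)]; ring
  refine ⟨?_, hsecond⟩
  -- first bound
  by_cases hs1 : s = 1
  · subst hs1
    have hl : ((x + h : ℝ):ℂ) ^ (1:ℂ) - ((x:ℝ):ℂ) ^ (1:ℂ) = ((h:ℝ):ℂ) := by
      rw [Complex.cpow_one, Complex.cpow_one]; push_cast; ring
    have hxc : ((x:ℝ):ℂ) ^ (1:ℂ) * (((h:ℝ):ℂ) / ((x:ℝ):ℂ)) = ((h:ℝ):ℂ) := by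
      rw [Complex.cpow_one]; field_simp
    rw [hl, div_one, hxc, sub_self, norm_zero]
    have h0 : ‖(1:ℂ) - 1‖ = 0 := by simp
    rw [h0]
    have : (0:ℝ) < x ^ 2 := by positivity
    rw [mul_zero, zero_mul, zero_div]
  · have hs1' : s - 1 ≠ 0 := sub_ne_zero.mpr hs1
    -- rewrite the target as an integral
    have hconst : ((x : ℝ) : ℂ) ^ s * (((h:ℝ):ℂ) / ((x:ℝ):ℂ))
        = ∫ _ in x..(x + h), ((x:ℝ):ℂ) ^ (s - 1) := by
      rw [intervalIntegral.integral_const]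
      rw [Complex.cpow_sub _ _ hx0, Complex.cpow_one]
      push_cast
      rw [show x + h - x = h by ring]
      simp [Complex.real_smul]
      ring
    have hcont : IntervalIntegrable (fun u : ℝ => ((u:ℝ):ℂ) ^ (s - 1))
        MeasureTheory.volume x (x + h) := by
      apply ContinuousOn.intervalIntegrable
      intro u hu
      rw [Set.uIcc_of_le (by linarith : x ≤ x + h)] at hu
      exact (Complex.continuousAt_ofReal_cpow_const u (s - 1)
        (Or.inr (lt_of_lt_of_le hx hu.1).ne')).continuousWithinAt
    have hdiff : (((x + h : ℝ) : ℂ) ^ s - ((x : ℝ) : ℂ) ^ s) / s -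
        ((x : ℝ) : ℂ) ^ s * (((h:ℝ):ℂ) / ((x:ℝ):ℂ))
        = ∫ u in x..(x + h), (((u:ℝ):ℂ) ^ (s - 1) - ((x:ℝ):ℂ) ^ (s - 1)) := by
      rw [hid, hconst, intervalIntegral.integral_sub hcont intervalIntegrable_const]
    have hinner : ∀ u ∈ Set.uIoc x (x + h),
        ‖((u:ℝ):ℂ) ^ (s - 1) - ((x:ℝ):ℂ) ^ (s - 1)‖ ≤
          ‖s - 1‖ * (512 * x ^ s.re / x ^ 2 * h) := by
      intro u hu
      rw [Set.uIoc_of_le (by linarith : x ≤ x + h)] at hu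
      have hu1 : x ≤ u := hu.1.le
      have hu2 : u ≤ 2 * x := by have := hu.2; linarith
      have hid2 : (((u:ℝ):ℂ) ^ (s - 1) - ((x:ℝ):ℂ) ^ (s - 1)) / (s - 1)
          = ∫ v in x..u, ((v:ℝ):ℂ) ^ ((s - 1) - 1) := key_int hx hu1 hs1'
      have hmul : ((u:ℝ):ℂ) ^ (s - 1) - ((x:ℝ):ℂ) ^ (s - 1)
          = (s - 1) * ∫ v in x..u, ((v:ℝ):ℂ) ^ ((s - 1) - 1) := by
        rw [← hid2, mul_div_cancel₀ _ hs1']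
      rw [hmul, norm_mul]
      refine mul_le_mul_of_nonneg_left ?_ (norm_nonneg _)
      have hbd2 : ∀ v ∈ Set.uIoc x u, ‖((v:ℝ):ℂ) ^ ((s - 1) - 1)‖ ≤
          512 * x ^ s.re / x ^ 2 := by
        intro v hv
        rw [Set.uIoc_of_le hu1] at hv
        have hvpos : 0 < v := hx.trans hv.1
        rw [Complex.norm_cpow_eq_rpow_re_of_pos hvpos]
        have h1 : v ^ ((s - 1) - 1).re ≤ 512 * x ^ ((s - 1) - 1).re :=
          rpow_aux hx hv.1.le (by have := hv.2; linarith) (by simp [Complex.sub_re]; linarith)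
        calc v ^ ((s - 1) - 1).re ≤ 512 * x ^ ((s - 1) - 1).re := h1
          _ = 512 * x ^ s.re / x ^ 2 := by
              simp only [Complex.sub_re, Complex.one_re]
              rw [show s.re - 1 - 1 = s.re - 2 by ring, Real.rpow_sub hx,
                show (2:ℝ) = ((2:ℕ):ℝ) by norm_num, Real.rpow_natCast]
              ring
      calc ‖∫ v in x..u, ((v:ℝ):ℂ) ^ ((s - 1) - 1)‖
          ≤ 512 * x ^ s.re / x ^ 2 * |u - x| :=
            intervalIntegral.norm_integral_le_of_norm_le_const hbd2
        _ ≤ 512 * x ^ s.re / x ^ 2 * h := by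
            have hC : (0:ℝ) ≤ 512 * x ^ s.re / x ^ 2 := by positivity
            have hux : |u - x| ≤ h := by rw [_root_.abs_of_nonneg (by linarith)]; linarith [hu.2]
            exact mul_le_mul_of_nonneg_left hux hC
    have hfin : ‖∫ u in x..(x + h), (((u:ℝ):ℂ) ^ (s - 1) - ((x:ℝ):ℂ) ^ (s - 1))‖ ≤
        ‖s - 1‖ * (512 * x ^ s.re / x ^ 2 * h) * |x + h - x| :=
      intervalIntegral.norm_integral_le_of_norm_le_const hinner
    rw [hdiff]
    calc ‖∫ u in x..(x + h), (((u:ℝ):ℂ) ^ (s - 1) - ((x:ℝ):ℂ) ^ (s - 1))‖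
        ≤ ‖s - 1‖ * (512 * x ^ s.re / x ^ 2 * h) * |x + h - x| := hfin
      _ = 512 * ‖((x : ℝ) : ℂ) ^ s‖ * ‖s - 1‖ * h ^ 2 / x ^ 2 := by
          rw [habs, _root_.abs_of_pos (by linarith : (0:ℝ) < x + h - x)]; ring
end
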